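/- Let α and τ_α be real numbers with α < −1 and 0 ≤ τ_α ≤ −1/(2α). Then for every real number y, the complex modulus |iy + 1 − α·e^{−iyτ_α}| ≥ −α − 1. -/

import Mathlib

open Complex

theorem abs_f1_ge_neg_alpha_sub_one
    (α τα : ℝ) (hα : α < -1) (hτα₀ : 0 ≤ τα) (hτα : τα ≤ -1 / (2 * α)) :
    ∀ y : ℝ, ‖Complex.I * (y : ℂ) + 1
        - (α : ℂ) * Complex.exp (-Complex.I * (y : ℂ) * (τα : ℂ))‖ ≥ -α - 1 := by
  have hα0 : α < 0 := by linarith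
  -- real key inequality for y ≥ 0
  have keyR : ∀ y : ℝ, 0 ≤ y →
      (-α - 1) ^ 2 ≤ (1 - α * Real.cos (y * τα)) ^ 2 + (y + α * Real.sin (y * τα)) ^ 2 := by
    intro y hy
    set θ := y * τα with hθdef
    have hθ0 : 0 ≤ θ := mul_nonneg hy hτα₀
    have h1 : -(2 * α) * τα ≤ 1 := by
      have h := mul_le_mul_of_nonneg_left hτα (show (0:ℝ) ≤ -(2 * α) by linarith)
      calc -(2 * α) * τα ≤ -(2 * α) * (-1 / (2 * α)) := h
        _ = 2 * α / (2 * α) := by ring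
        _ = 1 := div_self (by linarith)
    have hyθ : -(2 * α) * θ ≤ y := by
      have := mul_le_mul_of_nonneg_left h1 hy
      nlinarith
    have hsin : Real.sin θ ≤ θ := Real.sin_le hθ0
    have hIm : -α * θ ≤ y + α * Real.sin θ := by nlinarith
    rcases le_or_gt 1 θ with hθ1 | hθ1
    · -- θ ≥ 1 : imaginary part alone is large
      have h2 : -α - 1 ≤ y + α * Real.sin θ := by nlinarith
      nlinarith [sq_nonneg (1 - α * Real.cos θ), sq_nonneg (y + α * Real.sin θ + α + 1)]
    · -- θ < 1
      have hcos : 1 - θ ^ 2 / 2 ≤ Real.cos θ := Real.one_sub_sq_div_two_le_cos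
      have hRe : 1 - α + α * θ ^ 2 / 2 ≤ 1 - α * Real.cos θ := by nlinarith
      have hθ2 : θ ^ 2 ≤ 1 := by nlinarith
      have hRepos : 0 < 1 - α + α * θ ^ 2 / 2 := by nlinarith
      have hImnn : 0 ≤ -α * θ := mul_nonneg (by linarith) hθ0
      have hRe2 : (1 - α + α * θ ^ 2 / 2) ^ 2 ≤ (1 - α * Real.cos θ) ^ 2 := by nlinarith
      have hIm2 : (-α * θ) ^ 2 ≤ (y + α * Real.sin θ) ^ 2 := by nlinarith
      nlinarith [sq_nonneg θ, sq_nonneg (α * θ ^ 2)]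
  -- extend to all y (the expression is even in y)
  have keyR' : ∀ y : ℝ,
      (-α - 1) ^ 2 ≤ (1 - α * Real.cos (y * τα)) ^ 2 + (y + α * Real.sin (y * τα)) ^ 2 := by
    intro y
    rcases le_total 0 y with hy | hy
    · exact keyR y hy
    · have h := keyR (-y) (by linarith)
      rw [neg_mul, Real.cos_neg, Real.sin_neg] at h
      have hB : (-y + α * -Real.sin (y * τα)) ^ 2 = (y + α * Real.sin (y * τα)) ^ 2 := by ring
      linarith
  intro y
  have hexp : Complex.I * (y : ℂ) + 1 - (α : ℂ) * Complex.exp (-Complex.I * (y : ℂ) * (τα : ℂ))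
      = ((1 - α * Real.cos (y * τα) : ℝ) : ℂ) + ((y + α * Real.sin (y * τα) : ℝ) : ℂ) * I := by
    rw [show -Complex.I * (y : ℂ) * (τα : ℂ) = ((-(y * τα) : ℝ) : ℂ) * I by push_cast; ring,
      Complex.exp_mul_I, ← Complex.ofReal_cos, ← Complex.ofReal_sin,
      Real.cos_neg, Real.sin_neg]
    push_cast
    ring
  rw [ge_iff_le, hexp, Complex.norm_add_mul_I]
  rcases le_or_gt (-α - 1) 0 with h | h
  · exact h.trans (Real.sqrt_nonneg _)
  · rw [show (-α - 1 : ℝ) = Real.sqrt ((-α - 1) ^ 2) by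
      rw [Real.sqrt_sq h.le]]
    exact Real.sqrt_le_sqrt (keyR' y)
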